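/- Let x, y, w ∈ ℝ^n satisfy x ≥ 0, y ≥ 0, w ≥ 0 componentwise, x ≠ 0, and ‖y‖² + x^⊤w − (x^⊤y)²/‖x‖² = 0. Then x^⊤w = 0 and x^⊤y = ‖x‖·‖y‖; moreover, if y ≠ 0 then y = (‖y‖/‖x‖)·x. -/

import Mathlib

open scoped RealInnerProductSpace

/-- Key intermediate claim in the proof of Theorem 3.1:
a zero objective value in (NLP3) forces complementarity and equality in
Cauchy–Schwarz, hence proportionality of `y` and `x`. -/
theorem stmt19 {n : ℕ} (x y w : EuclideanSpace ℝ (Fin n))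
    (hx : ∀ i, 0 ≤ x i) (hy : ∀ i, 0 ≤ y i) (hw : ∀ i, 0 ≤ w i)
    (hx0 : x ≠ 0)
    (hzero : ‖y‖ ^ 2 + ⟪x, w⟫ - ⟪x, y⟫ ^ 2 / ‖x‖ ^ 2 = 0) :
    ⟪x, w⟫ = 0 ∧ ⟪x, y⟫ = ‖x‖ * ‖y‖ ∧ (y ≠ 0 → y = (‖y‖ / ‖x‖) • x) := by
  have hxn : (0 : ℝ) < ‖x‖ := norm_pos_iff.mpr hx0
  have hxw : 0 ≤ ⟪x, w⟫ := by
    rw [EuclideanSpace.inner_eq_star_dotProduct]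
    simp only [dotProduct, RCLike.star_def, starRingEnd_apply]
    exact Finset.sum_nonneg fun i _ => mul_nonneg (by simpa using hw i) (by simpa using hx i)
  have hcs : ⟪x, y⟫ ^ 2 ≤ ‖x‖ ^ 2 * ‖y‖ ^ 2 := by
    nlinarith [abs_real_inner_le_norm x y, sq_abs (⟪x, y⟫ : ℝ), abs_nonneg (⟪x, y⟫ : ℝ),
      norm_nonneg x, norm_nonneg y]
  have hge : ⟪x, y⟫ ^ 2 / ‖x‖ ^ 2 ≤ ‖y‖ ^ 2 :=
    (div_le_iff₀ (by positivity)).mpr (by nlinarith)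
  have h1 : ⟪x, w⟫ = 0 := le_antisymm (by linarith) hxw
  have hxy0 : 0 ≤ ⟪x, y⟫ := by
    rw [EuclideanSpace.inner_eq_star_dotProduct]
    simp only [dotProduct, RCLike.star_def, starRingEnd_apply]
    exact Finset.sum_nonneg fun i _ => mul_nonneg (by simpa using hy i) (by simpa using hx i)
  have heq : ⟪x, y⟫ ^ 2 = ‖x‖ ^ 2 * ‖y‖ ^ 2 := by
    have hd : ⟪x, y⟫ ^ 2 / ‖x‖ ^ 2 = ‖y‖ ^ 2 := by linarith
    have := (div_eq_iff (by positivity : (‖x‖:ℝ) ^ 2 ≠ 0)).mp hd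
    linarith [this]
  have h2 : ⟪x, y⟫ = ‖x‖ * ‖y‖ := by
    have hfac : (⟪x, y⟫ - ‖x‖ * ‖y‖) * (⟪x, y⟫ + ‖x‖ * ‖y‖) = 0 := by nlinarith
    rcases mul_eq_zero.mp hfac with h | h
    · linarith
    · nlinarith [mul_nonneg (norm_nonneg x) (norm_nonneg y)]
  refine ⟨h1, h2, fun hy0 => ?_⟩
  have hsm := inner_eq_norm_mul_iff_real.mp h2
  symm
  rw [div_eq_inv_mul, mul_smul, hsm, smul_smul, inv_mul_cancel₀ hxn.ne', one_smul]
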